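/- Let T be a square matrix over a commutative ring whose entries encode valid transitions of independent-set states around a cycle; then for the prism graph, Ind(GP(n,1), x) = Tr(T^n) where T is the 4×4 matrix indexed by states (a,b) ∈ {0,1}^2 with a·b = 0, and T((a,b),(a',b')) = x^{a'+b'} if a·a' = 0 and b·b' = 0, and 0 otherwise. -/

import Mathlib

open Polynomial

/-- A finset of vertices is independent: no two of its vertices are adjacent. -/
def SimpleGraph.IsIndepFinset {V : Type*} (G : SimpleGraph V) (S : Finset V) : Prop :=
  ∀ v ∈ S, ∀ w ∈ S, ¬ G.Adj v w

open scoped Classical in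
/-- The independence polynomial `Ind(G,x) = ∑_S x^{|S|}` over independent sets `S`. -/
noncomputable def indPoly {V : Type*} [Fintype V] (G : SimpleGraph V) : Polynomial ℝ :=
  ∑ S ∈ Finset.univ.filter (fun S => G.IsIndepFinset S), X ^ S.card

open scoped Classical in
/-- The independence number: the largest cardinality of an independent set. -/
noncomputable def indepNum {V : Type*} [Fintype V] (G : SimpleGraph V) : ℕ :=
  (Finset.univ.filter (fun S => G.IsIndepFinset S)).sup Finset.card

/-- Underlying relation of the generalized Petersen graph `GP(n,k)`. -/
def GPRel (n k : ℕ) : (ZMod n ⊕ ZMod n) → (ZMod n ⊕ ZMod n) → Prop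
  | .inl i, .inl j => j = i + 1          -- outer cycle
  | .inr i, .inr j => j = i + (k : ZMod n)  -- inner chords
  | .inl i, .inr j => i = j              -- spokes
  | .inr _, .inl _ => False

/-- The generalized Petersen graph `GP(n,k)` on vertices `u_i = inl i`, `v_i = inr i`. -/
def GP (n k : ℕ) : SimpleGraph (ZMod n ⊕ ZMod n) := SimpleGraph.fromRel (GPRel n k)


/-- Transfer matrix for the prism graph, indexed by occupancy states of a spoke pair. -/
noncomputable def prismT : Matrix (Bool × Bool) (Bool × Bool) (Polynomial ℝ) :=
  fun p q =>
    if (p.1 && p.2) = false ∧ (q.1 && q.2) = false ∧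
        (p.1 && q.1) = false ∧ (p.2 && q.2) = false then
      X ^ ((if q.1 then 1 else 0) + (if q.2 then 1 else 0))
    else 0

open scoped Classical

lemma pow_apply_walk {ι : Type*} [Fintype ι] [DecidableEq ι] {R : Type*} [CommSemiring R] (M : Matrix ι ι R) :
    ∀ (m : ℕ) (a b : ι),
      (M ^ m) a b = ∑ f : Fin (m+1) → ι,
        if f 0 = a ∧ f (Fin.last m) = b then ∏ i : Fin m, M (f i.castSucc) (f i.succ) else 0
  | 0, a, b => by
      rw [pow_zero]
      rw [show (∑ f : Fin (0+1) → ι,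
          if f 0 = a ∧ f (Fin.last 0) = b then ∏ i : Fin 0, M (f i.castSucc) (f i.succ) else 0)
          = ∑ c : ι, if c = a ∧ c = b then 1 else 0 from
        Fintype.sum_equiv (Equiv.funUnique (Fin 1) ι) _ _ (fun f => by
          simp [Equiv.funUnique, Fin.last])]
      by_cases hab : a = b
      · simp [Matrix.one_apply, hab, Finset.sum_ite_eq]
      · rw [Matrix.one_apply_ne hab, Finset.sum_eq_zero]
        intro c _
        simp only [ite_eq_right_iff, one_ne_zero]
        rintro ⟨h1, h2⟩
        exact absurd (h1.symm.trans h2) hab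
  | (m+1), a, b => by
      rw [pow_succ', Matrix.mul_apply]
      have lhs : ∀ c, M a c * (M ^ m) c b = ∑ g : Fin (m+1) → ι,
          if g 0 = c ∧ g (Fin.last m) = b then
            M a c * ∏ i : Fin m, M (g i.castSucc) (g i.succ) else 0 := by
        intro c
        rw [pow_apply_walk M m c b, Finset.mul_sum]
        exact Finset.sum_congr rfl fun g _ => by split_ifs <;> simp
      simp only [lhs]
      rw [Finset.sum_comm]
      have lhs2 : ∀ g : Fin (m+1) → ι, (∑ c : ι, if g 0 = c ∧ g (Fin.last m) = b then
          M a c * ∏ i : Fin m, M (g i.castSucc) (g i.succ) else 0) =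
          (if g (Fin.last m) = b then
            M a (g 0) * ∏ i : Fin m, M (g i.castSucc) (g i.succ) else 0) := by
        intro g
        rw [Finset.sum_congr rfl (fun c _ => by
          rw [show (if g 0 = c ∧ g (Fin.last m) = b then
              M a c * ∏ i : Fin m, M (g i.castSucc) (g i.succ) else 0) =
            (if g 0 = c then (if g (Fin.last m) = b then
              M a c * ∏ i : Fin m, M (g i.castSucc) (g i.succ) else 0) else 0) from by
            by_cases h1 : g 0 = c <;> by_cases h2 : g (Fin.last m) = b <;>
              simp [h1, h2]])]
        rw [Finset.sum_ite_eq]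
        simp
      simp only [lhs2]
      -- now the RHS
      rw [show (∑ f : Fin (m+1+1) → ι,
          if f 0 = a ∧ f (Fin.last (m+1)) = b then
            ∏ i : Fin (m+1), M (f i.castSucc) (f i.succ) else 0)
          = ∑ p : ι × (Fin (m+1) → ι),
          if p.1 = a ∧ p.2 (Fin.last m) = b then
            M p.1 (p.2 0) * ∏ i : Fin m, M (p.2 i.castSucc) (p.2 i.succ) else 0 from
        Fintype.sum_equiv (Fin.consEquiv (fun _ : Fin (m+2) => ι)).symm _ _ (fun f => ?_)]
      · rw [Fintype.sum_prod_type, Finset.sum_comm]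
        refine Finset.sum_congr rfl fun g _ => ?_
        rw [Finset.sum_congr rfl (fun c _ => show
            (if c = a ∧ g (Fin.last m) = b then
              M c (g 0) * ∏ i : Fin m, M (g i.castSucc) (g i.succ) else 0) =
            (if c = a then (if g (Fin.last m) = b then
              M c (g 0) * ∏ i : Fin m, M (g i.castSucc) (g i.succ) else 0) else 0) from by
          by_cases h1 : c = a <;> by_cases h2 : g (Fin.last m) = b <;> simp [h1, h2])]
        rw [Finset.sum_ite_eq']
        simp
      · -- termwise: f's ite equals the cons-decomposed ite
        have hdec : (Fin.consEquiv (fun _ : Fin (m+2) => ι)).symm f =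
            (f 0, fun i => f i.succ) := rfl
        rw [hdec]
        have hl : f (Fin.last (m+1)) = (fun i : Fin (m+1) => f i.succ) (Fin.last m) := by
          rw [← Fin.succ_last]
        have hp : (∏ i : Fin (m+1), M (f i.castSucc) (f i.succ)) =
            M (f 0) (f (0 : Fin (m+1)).succ) * ∏ i : Fin m,
              M (f i.succ.castSucc) (f i.succ.succ) := by
          rw [Fin.prod_univ_succ]
          rfl
        by_cases h1 : f 0 = a <;> by_cases h2 : f (Fin.last (m+1)) = b <;>
          simp only [h1, h2, hl] at * <;>
          simp_all [hp, Fin.succ_castSucc, -Fin.castSucc_succ]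

lemma trace_pow_eq_cycle {ι : Type*} [Fintype ι] [DecidableEq ι] {R : Type*} [CommSemiring R]
    (M : Matrix ι ι R) (n : ℕ) [NeZero n] :
    (M ^ n).trace = ∑ g : ZMod n → ι, ∏ i : ZMod n, M (g i) (g (i + 1)) := by
  have hn0 : 0 < n := Nat.pos_of_ne_zero (NeZero.ne n)
  rw [Matrix.trace]
  simp only [Matrix.diag, pow_apply_walk]
  rw [Finset.sum_comm]
  have step1 : ∀ f : Fin (n+1) → ι, (∑ a : ι, if f 0 = a ∧ f (Fin.last n) = a then
      ∏ i : Fin n, M (f i.castSucc) (f i.succ) else 0) =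
      if f (Fin.last n) = f 0 then ∏ i : Fin n, M (f i.castSucc) (f i.succ) else 0 := by
    intro f
    rw [Finset.sum_eq_single (f 0)]
    · by_cases h : f (Fin.last n) = f 0 <;> simp [h]
    · intro c _ hc
      simp only [ite_eq_right_iff]
      rintro ⟨h1, h2⟩
      exact absurd h1.symm hc
    · simp
  simp only [step1]
  rw [← Finset.sum_filter]
  refine Finset.sum_nbij'
    (fun f => fun z : ZMod n => f ⟨z.val, lt_trans (ZMod.val_lt z) (Nat.lt_succ_self n)⟩)
    (fun g => fun k : Fin (n+1) => g ((k : ℕ) : ZMod n))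
    (fun f _ => Finset.mem_univ _) ?_ ?_ ?_ ?_
  · -- membership in filter
    intro g _
    simp only [Finset.mem_filter, Finset.mem_univ, true_and, Fin.val_last]
    simp [ZMod.natCast_self]
  · -- left inverse
    intro f hf
    simp only [Finset.mem_filter, Finset.mem_univ, true_and] at hf
    funext k
    simp only [ZMod.val_natCast]
    by_cases h : (k : ℕ) < n
    · congr 1
      exact Fin.ext (by simp [Nat.mod_eq_of_lt h])
    · have hk : (k : ℕ) = n := by omega
      have hkl : k = Fin.last n := Fin.ext (by simp [hk])
      rw [hkl, hf]
      congr 1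
      exact Fin.ext (by simp [hk])
  · -- right inverse
    intro g _
    funext z
    exact congrArg g (ZMod.natCast_rightInverse z)
  · -- summand equality
    intro f hf
    simp only [Finset.mem_filter, Finset.mem_univ, true_and] at hf
    refine Finset.prod_nbij' (fun i : Fin n => ((i : ℕ) : ZMod n))
      (fun z : ZMod n => ⟨z.val, ZMod.val_lt z⟩)
      (fun _ _ => Finset.mem_univ _) (fun _ _ => Finset.mem_univ _) ?_ ?_ ?_
    · intro i _
      exact Fin.ext (by simp [ZMod.val_natCast, Nat.mod_eq_of_lt i.isLt])
    · intro z _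
      exact ZMod.natCast_rightInverse z
    · intro i _
      have h1 : (fun z : ZMod n => f ⟨z.val, lt_trans (ZMod.val_lt z) (Nat.lt_succ_self n)⟩)
          ((i : ℕ) : ZMod n) = f i.castSucc :=
        congrArg f (Fin.ext (by simp [ZMod.val_natCast, Nat.mod_eq_of_lt i.isLt]))
      have hv : (((i : ℕ) : ZMod n) + 1).val = ((i : ℕ) + 1) % n := by
        rw [← Nat.cast_one, ← Nat.cast_add, ZMod.val_natCast]
      have h2 : (fun z : ZMod n => f ⟨z.val, lt_trans (ZMod.val_lt z) (Nat.lt_succ_self n)⟩)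
          (((i : ℕ) : ZMod n) + 1) = f i.succ := by
        simp only [hv]
        by_cases h : (i : ℕ) + 1 < n
        · congr 1
          exact Fin.ext (by simp [Nat.mod_eq_of_lt h])
        · have hi : (i : ℕ) + 1 = n := by omega
          rw [show (⟨((i:ℕ)+1) % n, _⟩ : Fin (n+1)) = (0 : Fin (n+1)) from
            Fin.ext (by simp [hi])]
          rw [← hf]
          congr 1
          exact Fin.ext (by simp [hi, Fin.val_last])
      exact (congrArg₂ M h1 h2).symm


/-- weight of a state -/
def stWt (p : Bool × Bool) : ℕ := (if p.1 then 1 else 0) + (if p.2 then 1 else 0)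

/-- validity of a cyclic state function -/
def stValid (n : ℕ) (g : ZMod n → Bool × Bool) : Prop :=
  ∀ i : ZMod n, ((g i).1 && (g i).2) = false ∧ ((g i).1 && (g (i+1)).1) = false ∧
    ((g i).2 && (g (i+1)).2) = false

lemma cycle_prod_prismT (n : ℕ) [NeZero n] (g : ZMod n → Bool × Bool) :
    (∏ i : ZMod n, prismT (g i) (g (i+1))) =
      if stValid n g then X ^ (∑ i : ZMod n, stWt (g i)) else 0 := by
  unfold prismT
  rw [Fintype.prod_ite_zero]
  have hcond : (∀ i : ZMod n, ((g i).1 && (g i).2) = false ∧ ((g (i+1)).1 && (g (i+1)).2) = false ∧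
      ((g i).1 && (g (i+1)).1) = false ∧ ((g i).2 && (g (i+1)).2) = false) ↔ stValid n g := by
    constructor
    · intro h i
      exact ⟨(h i).1, (h i).2.2.1, (h i).2.2.2⟩
    · intro h i
      exact ⟨(h i).1, (h (i+1)).1, (h i).2.1, (h i).2.2⟩
  rw [if_congr hcond rfl rfl]
  congr 1
  rw [Finset.prod_pow_eq_pow_sum]
  congr 1
  exact Fintype.sum_equiv (Equiv.addRight (1 : ZMod n)) _ _ (fun i => rfl)

/-- state function of a vertex set -/
noncomputable def toSt (n : ℕ) [NeZero n] (S : Finset (ZMod n ⊕ ZMod n)) : ZMod n → Bool × Bool :=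
  fun i => (decide (Sum.inl i ∈ S), decide (Sum.inr i ∈ S))

noncomputable def ofSt (n : ℕ) [NeZero n] (g : ZMod n → Bool × Bool) : Finset (ZMod n ⊕ ZMod n) :=
  Finset.univ.filter (fun v => Sum.elim (fun i => (g i).1 = true) (fun i => (g i).2 = true) v)

lemma toSt_bijective (n : ℕ) [NeZero n] : Function.Bijective (toSt n) := by
  refine Function.bijective_iff_has_inverse.2 ⟨ofSt n, ?_, ?_⟩
  · intro S
    ext v
    rcases v with i | i <;> simp [ofSt, toSt]
  · intro g
    funext i
    refine Prod.ext ?_ ?_ <;> simp [ofSt, toSt]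

lemma stValid_iff (n : ℕ) [NeZero n] (S : Finset (ZMod n ⊕ ZMod n)) :
    stValid n (toSt n S) ↔ ∀ i : ZMod n, ¬(Sum.inl i ∈ S ∧ Sum.inr i ∈ S) ∧
      ¬(Sum.inl i ∈ S ∧ Sum.inl (i+1) ∈ S) ∧ ¬(Sum.inr i ∈ S ∧ Sum.inr (i+1) ∈ S) := by
  simp only [stValid, toSt, Bool.and_eq_false_iff, decide_eq_false_iff_not]
  constructor <;> intro h i <;> have := h i <;> tauto

lemma indep_iff (n : ℕ) [NeZero n] (hn : 3 ≤ n) (S : Finset (ZMod n ⊕ ZMod n)) :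
    (GP n 1).IsIndepFinset S ↔ ∀ i : ZMod n, ¬(Sum.inl i ∈ S ∧ Sum.inr i ∈ S) ∧
      ¬(Sum.inl i ∈ S ∧ Sum.inl (i+1) ∈ S) ∧ ¬(Sum.inr i ∈ S ∧ Sum.inr (i+1) ∈ S) := by
  haveI : Fact (1 < n) := ⟨by omega⟩
  have hne : ∀ i : ZMod n, i ≠ i + 1 := by
    intro i h
    have h1 : (1 : ZMod n) = 0 := left_eq_add.mp h
    exact one_ne_zero h1
  constructor
  · intro hS i
    refine ⟨?_, ?_, ?_⟩
    · rintro ⟨h1, h2⟩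
      exact hS _ h1 _ h2 ((SimpleGraph.fromRel_adj _ _ _).2
        ⟨by simp, Or.inl (by simp [GPRel])⟩)
    · rintro ⟨h1, h2⟩
      refine hS _ h1 _ h2 ((SimpleGraph.fromRel_adj _ _ _).2
        ⟨by simp [hne i], Or.inl (by simp [GPRel])⟩)
    · rintro ⟨h1, h2⟩
      refine hS _ h1 _ h2 ((SimpleGraph.fromRel_adj _ _ _).2
        ⟨by simp [hne i], Or.inl (by simp [GPRel])⟩)
  · intro h v hv w hw hadj
    rw [GP, SimpleGraph.fromRel_adj] at hadj
    obtain ⟨hvw, hrel⟩ := hadj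
    rcases v with i | i <;> rcases w with j | j
    · simp only [GPRel] at hrel
      rcases hrel with rfl | rfl
      · exact (h _).2.1 ⟨hv, hw⟩
      · exact (h _).2.1 ⟨hw, hv⟩
    · simp only [GPRel] at hrel
      rcases hrel with rfl | hF
      · exact (h _).1 ⟨hv, hw⟩
      · exact hF
    · simp only [GPRel] at hrel
      rcases hrel with hF | rfl
      · exact hF
      · exact (h _).1 ⟨hw, hv⟩
    · simp only [GPRel, Nat.cast_one] at hrel
      rcases hrel with rfl | rfl
      · exact (h _).2.2 ⟨hv, hw⟩
      · exact (h _).2.2 ⟨hw, hv⟩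

lemma card_eq_sum_stWt (n : ℕ) [NeZero n] (S : Finset (ZMod n ⊕ ZMod n)) :
    S.card = ∑ i : ZMod n, stWt (toSt n S i) := by
  have h1 : S.card = ∑ v : ZMod n ⊕ ZMod n, if v ∈ S then 1 else 0 := by
    rw [Finset.sum_ite_mem, Finset.univ_inter, Finset.card_eq_sum_ones]
  rw [h1, Fintype.sum_sum_type, ← Finset.sum_add_distrib]
  refine Finset.sum_congr rfl fun i _ => ?_
  simp [stWt, toSt]

lemma indPoly_GP (n : ℕ) [NeZero n] (hn : 3 ≤ n) :
    indPoly (GP n 1) = ∑ g : ZMod n → Bool × Bool,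
      if stValid n g then X ^ (∑ i : ZMod n, stWt (g i)) else 0 := by
  rw [indPoly, Finset.sum_filter]
  refine Fintype.sum_bijective (toSt n) (toSt_bijective n) _ _ fun S => ?_
  rw [if_congr ((indep_iff n hn S).trans (stValid_iff n S).symm) rfl rfl]
  rw [card_eq_sum_stWt n S]

/-- Transfer matrix formula: Ind(GP(n,1), x) = Tr(T^n). -/
theorem prism_transfer_matrix (n : ℕ) [NeZero n] (hn : 3 ≤ n) :
    indPoly (GP n 1) = (prismT ^ n).trace := by
  rw [indPoly_GP n hn]
  refine Eq.trans ?_ (trace_pow_eq_cycle prismT n).symm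
  exact Finset.sum_congr rfl fun g _ => (cycle_prod_prismT n g).symm
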